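/- There exist unique k-linear maps Ds, Dt : R → R satisfying αs·Ds(f) = f − σs(f) and αt·Dt(f) = f − σt(f) for all f ∈ R (the simple Demazure operators). Moreover, suppose m ≥ 2 and [m] = 0 in k. If m is even, then the two alternating compositions of length m agree: Ds ∘ Dt ∘ ⋯ ∘ Dt = Dt ∘ Ds ∘ ⋯ ∘ Ds (m factors each). If m is odd, then Ds ∘ Dt ∘ ⋯ ∘ Ds = [m−1] · (Dt ∘ Ds ∘ ⋯ ∘ Dt) (m factors each); in particular the braid relation for Demazure operators holds on the nose in the balanced case [m−1] = 1. -/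

import Mathlib

open MvPolynomial

/-- The quantum numbers `[n] ∈ k` attached to `δ ∈ k`:
`[0] = 0`, `[1] = 1`, `[n+1] = δ·[n] − [n−1]`. -/
def qn {k : Type*} [CommRing k] (δ : k) : ℕ → k
  | 0 => 0
  | 1 => 1
  | n + 2 => δ * qn δ (n + 1) - qn δ n

/-- The involution `σs` of `R = k[αs, αt]` (with `αs = X 0`, `αt = X 1`) determined by
`σs(αs) = −αs`, `σs(αt) = αt + δ·αs`. -/
noncomputable def σs {k : Type*} [CommRing k] (δ : k) :
    MvPolynomial (Fin 2) k →ₐ[k] MvPolynomial (Fin 2) k :=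
  aeval ![-(X 0), X 1 + C δ * X 0]

/-- The involution `σt` of `R = k[αs, αt]` determined by
`σt(αt) = −αt`, `σt(αs) = αs + δ·αt`. -/
noncomputable def σt {k : Type*} [CommRing k] (δ : k) :
    MvPolynomial (Fin 2) k →ₐ[k] MvPolynomial (Fin 2) k :=
  aeval ![X 0 + C δ * X 1, -(X 1)]

/-- The alternating composition `A ∘ B ∘ A ∘ ⋯` with `n` factors,
the leftmost factor being `A`. -/
def altComp {k M : Type*} [CommRing k] [AddCommGroup M] [Module k M] :
    (M →ₗ[k] M) → (M →ₗ[k] M) → ℕ → (M →ₗ[k] M)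
  | _, _, 0 => LinearMap.id
  | A, B, n + 1 => A ∘ₗ altComp B A n

section W
variable {k : Type*} [CommRing k] (δ : k)

lemma qn_rec' (a b c : ℕ) (h1 : a = c+2) (h2 : b = c+1) :
    qn δ a = δ * qn δ b - qn δ c := by subst h1 h2 ; rfl

lemma qn_zero : qn δ 0 = 0 := rfl
lemma qn_one : qn δ 1 = 1 := rfl
lemma qn_two : qn δ 2 = δ := by simp [qn]
lemma qn_rec (n : ℕ) : qn δ (n+2) = δ * qn δ (n+1) - qn δ n := rfl


lemma qn_addition (a b : ℕ) :
    qn δ (a + b + 1) = qn δ (a+1) * qn δ (b+1) - qn δ a * qn δ b := by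
  induction b using Nat.twoStepInduction generalizing a with
  | zero => simp [qn]
  | one =>
      have e : a + 1 + 1 = a + 2 := by omega
      rw [e, qn_rec]
      simp [qn] ; ring
  | more b ih1 ih2 =>
      have e : a + (b+2) + 1 = a + b + 3 := by omega
      have e2 : a + (b+1) + 1 = a + b + 2 := by omega
      have h2 := ih2 a
      have h1 := ih1 a
      rw [e2] at h2
      rw [e]
      have r : qn δ (a+b+3) = δ * qn δ (a+b+2) - qn δ (a+b+1) := rfl
      have r3 : qn δ (b+3) = δ * qn δ (b+2) - qn δ (b+1) := rfl
      have r4 : qn δ (b+2) = δ * qn δ (b+1) - qn δ b := rfl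
      linear_combination r + δ * h2 - h1 - qn δ (a+1) * r3 + qn δ a * r4

lemma qn_catalan (j : ℕ) : qn δ (j+1) * qn δ (j+1) = 1 + qn δ j * qn δ (j+2) := by
  induction j with
  | zero => simp [qn]
  | succ j ih =>
      have r1 : qn δ (j+3) = δ * qn δ (j+2) - qn δ (j+1) := rfl
      have r2 : qn δ (j+2) = δ * qn δ (j+1) - qn δ j := rfl
      linear_combination (-(qn δ (j+1))) * r1 + (qn δ (j+2)) * r2 + ih

/-- `[j+1]([2j+1]-1) = [j][2j+2]`. -/
lemma qn_q3 (j : ℕ) :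
    qn δ (j+1) * (qn δ (2*j+1) - 1) = qn δ j * qn δ (2*j+2) := by
  have h1 : qn δ (2*j+1) = qn δ (j+1) * qn δ (j+1) - qn δ j * qn δ j := by
    have := qn_addition δ j j ; rw [show j + j + 1 = 2*j+1 by omega] at this ; exact this
  have h2 : qn δ (2*j+2) = qn δ (j+2) * qn δ (j+1) - qn δ (j+1) * qn δ j := by
    have := qn_addition δ (j+1) j
    rw [show j + 1 + j + 1 = 2*j+2 by omega] at this ; exact this
  have h3 := qn_catalan δ j
  linear_combination qn δ (j+1) * h1 - qn δ j * h2 + qn δ (j+1) * h3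

lemma qn_four_rec (n : ℕ) :
    qn δ (n+4) + qn δ n = (δ*δ - 2) * qn δ (n+2) := by
  have r1 : qn δ (n+4) = δ * qn δ (n+3) - qn δ (n+2) := rfl
  have r2 : qn δ (n+3) = δ * qn δ (n+2) - qn δ (n+1) := rfl
  have r3 : qn δ (n+2) = δ * qn δ (n+1) - qn δ n := rfl
  linear_combination r1 + δ * r2 + r3


def sfun (v : k × k) : k × k := (δ * v.2 - v.1, v.2)

def Ws : ℕ → k × k → k × k
  | 0, v => v
  | n+1, v => sfun δ ((Ws n v.swap).swap)

def dsc (v : k × k) : k := 2 * v.1 - δ * v.2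

def Bs : ℕ → k × k → k
  | 0, _ => 0
  | 1, v => 2 * v.2 - δ * v.1
  | n+2, v => Bs (n+1) v.swap

lemma Ws_formula (j : ℕ) (v : k × k) :
    Ws δ (2*j+1) v = (qn δ (2*j+2) * v.2 - qn δ (2*j+1) * v.1,
                      qn δ (2*j+1) * v.2 - qn δ (2*j) * v.1)
    ∧ Ws δ (2*j+2) v = (qn δ (2*j+3) * v.1 - qn δ (2*j+2) * v.2,
                      qn δ (2*j+2) * v.1 - qn δ (2*j+1) * v.2) := by
  induction j generalizing v with
  | zero =>
      have r2 : qn δ 2 = δ * qn δ 1 - qn δ 0 := rfl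
      have r3 : qn δ 3 = δ * qn δ 2 - qn δ 1 := rfl
      have q0 : qn δ 0 = 0 := rfl
      have q1 : qn δ 1 = 1 := rfl
      norm_num
      rw [r3, r2, q0, q1]
      constructor
      · show sfun δ ((Ws δ 0 v.swap).swap) = _
        simp only [Ws, Prod.swap_swap, sfun, Prod.mk.injEq, Prod.fst_swap, Prod.snd_swap]
        constructor <;> ring
      · show sfun δ ((sfun δ ((Ws δ 0 v.swap.swap).swap)).swap) = _
        simp only [Ws, Prod.swap_swap, sfun, Prod.swap_prod_mk, Prod.mk.injEq, Prod.fst_swap, Prod.snd_swap]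
        constructor <;> ring
  | succ j ih =>
      rw [show 2*(j+1)+1 = 2*j+3 from by omega, show 2*(j+1)+2 = 2*j+4 from by omega,
          show 2*(j+1)+3 = 2*j+5 from by omega, show 2*(j+1) = 2*j+2 from by omega]
      have rA : qn δ (2*j+3) = δ * qn δ (2*j+2) - qn δ (2*j+1) :=
        qn_rec' δ _ _ (2*j+1) (by omega) (by omega)
      have rB : qn δ (2*j+4) = δ * qn δ (2*j+3) - qn δ (2*j+2) :=
        qn_rec' δ _ _ (2*j+2) (by omega) (by omega)
      have rC : qn δ (2*j+5) = δ * qn δ (2*j+4) - qn δ (2*j+3) :=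
        qn_rec' δ _ _ (2*j+3) (by omega) (by omega)
      have hodd : ∀ w : k × k, Ws δ (2*j+3) w =
          (qn δ (2*j+4) * w.2 - qn δ (2*j+3) * w.1,
           qn δ (2*j+3) * w.2 - qn δ (2*j+2) * w.1) := by
        intro w
        have h0 : Ws δ (2*j+3) w = sfun δ ((Ws δ (2*j+2) w.swap).swap) := by
          rw [show 2*j+3 = (2*j+2)+1 from by omega]
          rfl
        rw [h0, (ih w.swap).2]
        simp only [sfun, Prod.swap_prod_mk, Prod.mk.injEq, Prod.fst_swap, Prod.snd_swap]
        constructor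
        · linear_combination w.1 * rA - w.2 * rB
        · trivial
      refine ⟨hodd v, ?_⟩
      have h0 : Ws δ (2*j+4) v = sfun δ ((Ws δ (2*j+3) v.swap).swap) := by
        rw [show 2*j+4 = (2*j+3)+1 from by omega]
        rfl
      rw [h0, hodd v.swap]
      simp only [sfun, Prod.swap_prod_mk, Prod.mk.injEq, Prod.fst_swap, Prod.snd_swap]
      constructor
      · linear_combination (-v.1) * rC + v.2 * rB
      · trivial
end W


section Ctx
variable {k : Type*} [CommRing k]

/-- Abstract symmetric context for a pair of Demazure operators. -/
structure DemCtx (k : Type*) [CommRing k] (δ : k) where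
  x : MvPolynomial (Fin 2) k
  y : MvPolynomial (Fin 2) k
  σ1 : MvPolynomial (Fin 2) k →ₐ[k] MvPolynomial (Fin 2) k
  σ2 : MvPolynomial (Fin 2) k →ₐ[k] MvPolynomial (Fin 2) k
  D1 : MvPolynomial (Fin 2) k →ₗ[k] MvPolynomial (Fin 2) k
  D2 : MvPolynomial (Fin 2) k →ₗ[k] MvPolynomial (Fin 2) k
  hD1 : ∀ f, x * D1 f = f - σ1 f
  hD2 : ∀ f, y * D2 f = f - σ2 f
  hσ1x : σ1 x = - x
  hσ1y : σ1 y = y + C δ * x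
  hσ2y : σ2 y = - y
  hσ2x : σ2 x = x + C δ * y
  hinv1 : ∀ f, σ1 (σ1 f) = f
  hinv2 : ∀ f, σ2 (σ2 f) = f
  hxreg : ∀ f g, x * f = x * g → f = g
  hyreg : ∀ f g, y * f = y * g → f = g
  hvar : ∀ i : Fin 2, X i = x ∨ X i = y

variable {δ : k}

def DemCtx.mirror (c : DemCtx k δ) : DemCtx k δ where
  x := c.y
  y := c.x
  σ1 := c.σ2
  σ2 := c.σ1
  D1 := c.D2
  D2 := c.D1
  hD1 := c.hD2
  hD2 := c.hD1
  hσ1x := c.hσ2y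
  hσ1y := c.hσ2x
  hσ2y := c.hσ1x
  hσ2x := c.hσ1y
  hinv1 := c.hinv2
  hinv2 := c.hinv1
  hxreg := c.hyreg
  hyreg := c.hxreg
  hvar := fun i => (c.hvar i).symm

namespace DemCtx

noncomputable def P (c : DemCtx k δ) (n : ℕ) : MvPolynomial (Fin 2) k →ₗ[k] MvPolynomial (Fin 2) k :=
  altComp c.D1 c.D2 n

noncomputable def Q (c : DemCtx k δ) (n : ℕ) : MvPolynomial (Fin 2) k →ₗ[k] MvPolynomial (Fin 2) k :=
  altComp c.D2 c.D1 n

lemma P_mirror (c : DemCtx k δ) (n : ℕ) : c.mirror.P n = c.Q n := rfl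
lemma Q_mirror (c : DemCtx k δ) (n : ℕ) : c.mirror.Q n = c.P n := rfl
lemma P_zero (c : DemCtx k δ) (p) : c.P 0 p = p := rfl
lemma Q_zero (c : DemCtx k δ) (p) : c.Q 0 p = p := rfl
lemma P_succ (c : DemCtx k δ) (n : ℕ) (p) : c.P (n+1) p = c.D1 (c.Q n p) := rfl
lemma Q_succ (c : DemCtx k δ) (n : ℕ) (p) : c.Q (n+1) p = c.D2 (c.P n p) := rfl

lemma σ1_C (c : DemCtx k δ) (a : k) : c.σ1 (C a) = C a := by
  have := c.σ1.commutes a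
  simpa [MvPolynomial.algebraMap_eq] using this

lemma D1_C (c : DemCtx k δ) (a : k) : c.D1 (C a) = 0 := by
  apply c.hxreg
  rw [c.hD1, c.σ1_C, sub_self, mul_zero]

lemma D1_Cmul (c : DemCtx k δ) (a : k) (p) : c.D1 (C a * p) = C a * c.D1 p := by
  rw [← smul_eq_C_mul, ← smul_eq_C_mul, map_smul]

lemma D1_x (c : DemCtx k δ) : c.D1 c.x = C 2 := by
  apply c.hxreg
  rw [c.hD1, c.hσ1x, map_ofNat]
  ring

lemma D1_y (c : DemCtx k δ) : c.D1 c.y = - C δ := by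
  apply c.hxreg
  rw [c.hD1, c.hσ1y]
  ring

lemma D1_leibniz (c : DemCtx k δ) (f g) :
    c.D1 (f * g) = c.D1 f * g + c.σ1 f * c.D1 g := by
  apply c.hxreg
  rw [c.hD1, map_mul, mul_add, ← mul_assoc, ← mul_assoc, c.hD1 f,
    mul_comm c.x (c.σ1 f), mul_assoc, c.hD1 g]
  ring

lemma σ1_D1 (c : DemCtx k δ) (f) : c.σ1 (c.D1 f) = c.D1 f := by
  apply c.hxreg
  have h1 : c.σ1 (c.x * c.D1 f) = c.σ1 f - f := by
    rw [c.hD1, map_sub, c.hinv1]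
  rw [map_mul, c.hσ1x] at h1
  rw [c.hD1 f]
  linear_combination (-1 : MvPolynomial (Fin 2) k) * h1

lemma D1_D1 (c : DemCtx k δ) (f) : c.D1 (c.D1 f) = 0 := by
  apply c.hxreg
  rw [c.hD1, c.σ1_D1, sub_self, mul_zero]


noncomputable def lf (c : DemCtx k δ) (v : k × k) : MvPolynomial (Fin 2) k :=
  C v.1 * c.x + C v.2 * c.y

lemma lf_mirror (c : DemCtx k δ) (v : k × k) : c.mirror.lf v = c.lf v.swap := by
  simp only [lf, mirror, Prod.fst_swap, Prod.snd_swap]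
  ring

lemma σ1_lf (c : DemCtx k δ) (v : k × k) : c.σ1 (c.lf v) = c.lf (sfun δ v) := by
  simp only [lf, map_add, map_mul, c.σ1_C, c.hσ1x, c.hσ1y, sfun, map_sub]
  ring

lemma D1_lf (c : DemCtx k δ) (v : k × k) : c.D1 (c.lf v) = C (dsc δ v) := by
  simp only [lf, dsc, map_add, map_sub, map_mul, map_ofNat]
  rw [c.D1_Cmul, c.D1_Cmul, c.D1_x, c.D1_y, map_ofNat]
  ring

/-- The master commutation lemma. -/
lemma CL : ∀ (n : ℕ) (c : DemCtx k δ) (v : k × k) (p : MvPolynomial (Fin 2) k),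
    c.P (n+1) (c.lf v * p) = c.lf (Ws δ (n+1) v) * c.P (n+1) p
      + C (dsc δ ((Ws δ n v.swap).swap)) * c.Q n p + C (Bs δ n v) * c.P n p := by
  intro n
  induction n with
  | zero =>
      intro c v p
      rw [c.P_succ 0]
      rw [c.Q_zero, c.D1_leibniz, c.D1_lf, c.σ1_lf]
      show _ = c.lf (sfun δ ((Ws δ 0 v.swap).swap)) * c.D1 (c.Q 0 p) + _ + _
      rw [c.Q_zero]
      show _ = c.lf (sfun δ v) * c.D1 p + C (dsc δ v) * p + C 0 * c.P 0 p
      rw [map_zero]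
      ring
  | succ n ih =>
      intro c v p
      -- expand Q (n+1) applied to (lf v * p) via the mirror instance
      have hQ : c.Q (n+1) (c.lf v * p)
          = c.lf ((Ws δ (n+1) v.swap).swap) * c.Q (n+1) p
            + C (dsc δ ((Ws δ n v).swap)) * c.P n p + C (Bs δ n v.swap) * c.Q n p := by
        have := ih c.mirror v.swap p
        simp only [c.lf_mirror, Prod.swap_swap, c.P_mirror, c.Q_mirror] at this
        exact this
      rw [c.P_succ (n+1), hQ]
      rw [map_add, map_add, c.D1_leibniz, c.D1_Cmul, c.D1_Cmul, c.σ1_lf, c.D1_lf]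
      rw [show c.D1 (c.Q (n+1) p) = c.P (n+2) p from rfl]
      rw [show c.D1 (c.Q n p) = c.P (n+1) p from rfl]
      rw [show sfun δ ((Ws δ (n+1) v.swap).swap) = Ws δ (n+2) v from rfl]
      cases n with
      | zero =>
          rw [show c.P 0 p = p from rfl]
          rw [show c.D1 p = c.P 1 p from rfl]
          rw [show (Bs δ 1 v) = dsc δ ((Ws δ 0 v).swap) from by
            simp [Bs, dsc, Ws, Prod.fst_swap, Prod.snd_swap]]
          rw [show (Bs δ 0 v.swap : k) = 0 from rfl]
          rw [map_zero]
          ring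
      | succ m =>
          rw [show c.D1 (c.P (m+1) p) = 0 from c.D1_D1 _]
          rw [show (Bs δ (m+2) v : k) = Bs δ (m+1) v.swap from rfl]
          ring


/-- `Q`-version of the commutation lemma. -/
lemma CLQ (n : ℕ) (c : DemCtx k δ) (v : k × k) (p : MvPolynomial (Fin 2) k) :
    c.Q (n+1) (c.lf v * p) = c.lf ((Ws δ (n+1) v.swap).swap) * c.Q (n+1) p
      + C (dsc δ ((Ws δ n v).swap)) * c.P n p + C (Bs δ n v.swap) * c.Q n p := by
  have := CL n c.mirror v.swap p
  simp only [c.lf_mirror, Prod.swap_swap, c.P_mirror, c.Q_mirror] at this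
  exact this

lemma P_C_eq_zero : ∀ (n : ℕ) (c : DemCtx k δ) (a : k), c.P (n+1) (C a) = 0 := by
  intro n
  induction n with
  | zero => intro c a ; exact c.D1_C a
  | succ n ih =>
      intro c a
      rw [c.P_succ (n+1), show c.Q (n+1) = c.mirror.P (n+1) from rfl, ih c.mirror a, map_zero]

/-- Degree induction driver. -/
lemma vanish (c : DemCtx k δ) (T : MvPolynomial (Fin 2) k → MvPolynomial (Fin 2) k)
    (hadd : ∀ p q, T (p + q) = T p + T q)
    (hC : ∀ a : k, T (C a) = 0)
    (hmul : ∀ (v : k × k) (p : MvPolynomial (Fin 2) k),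
        ∃ w : k × k, T (c.lf v * p) = c.lf w * T p) :
    ∀ p, T p = 0 := by
  intro p
  induction p using MvPolynomial.induction_on with
  | C a => exact hC a
  | add p q hp hq => rw [hadd, hp, hq, add_zero]
  | mul_X p i hp =>
      have hx : (X i : MvPolynomial (Fin 2) k) = c.lf (1, 0) ∨
          (X i : MvPolynomial (Fin 2) k) = c.lf (0, 1) := by
        rcases c.hvar i with h | h
        · left ; rw [h] ; simp [lf]
        · right ; rw [h] ; simp [lf]
      rcases hx with h | h <;>
      · rw [mul_comm p (X i), h]
        obtain ⟨w, hw⟩ := hmul _ p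
        rw [hw, hp, mul_zero]

/-- Going up the ladder of vanishing. -/
lemma ladder (n₀ : ℕ) (ν : k)
    (h : ∀ (c : DemCtx k δ) (p : MvPolynomial (Fin 2) k), C ν * c.P (n₀+1) p = 0) :
    ∀ (i : ℕ) (c : DemCtx k δ) (p : MvPolynomial (Fin 2) k),
      C ν * c.P (n₀+1+i) p = 0 := by
  intro i
  induction i with
  | zero => exact h
  | succ i ih =>
      intro c p
      have e : n₀+1+(i+1) = (n₀+1+i)+1 := by omega
      rw [e, c.P_succ, show c.Q (n₀+1+i) = c.mirror.P (n₀+1+i) from rfl,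
        ← c.D1_Cmul, ih c.mirror p, map_zero]


lemma Bs_parity (j : ℕ) (v : k × k) :
    Bs δ (2*j+1) v = 2*v.2 - δ*v.1 ∧ Bs δ (2*j+2) v = 2*v.1 - δ*v.2 := by
  induction j generalizing v with
  | zero =>
      constructor
      · rfl
      · show Bs δ (2*0+1) v.swap = _
        rfl
  | succ j ih =>
      constructor
      · show Bs δ (2*j+3) v = _
        rw [show (2*j+3) = (2*j+1)+2 from by omega]
        show Bs δ (2*j+2) v.swap = _
        rw [(ih v.swap).2]
        simp
      · show Bs δ (2*(j+1)+2) v = _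
        rw [show (2*(j+1)+2) = (2*(j+1)+1)+1 from by omega]
        show Bs δ (2*(j+1)+1) v.swap = _
        rw [show (2*(j+1)+1) = 2*j+3 from by omega]
        rw [show (2*j+3) = (2*j+1)+2 from by omega]
        show Bs δ (2*j+2) v.swap.swap = _
        rw [(ih v.swap.swap).2]
        simp

lemma Bs_odd (j : ℕ) (v : k × k) : Bs δ (2*j+1) v = 2*v.2 - δ*v.1 := (Bs_parity j v).1
lemma Bs_even (j : ℕ) (v : k × k) : Bs δ (2*j+2) v = 2*v.1 - δ*v.2 := (Bs_parity j v).2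

lemma braid_even (j : ℕ) (c : DemCtx k δ) (μ : k) (hμ : μ * qn δ (2*j+2) = 0)
    (hvan : ∀ (c' : DemCtx k δ) (p : MvPolynomial (Fin 2) k),
      (C μ * C (qn δ (2*j+1)) - C μ) * c'.P (2*j+1) p = 0) :
    ∀ p, C μ * c.P (2*j+2) p = C μ * c.Q (2*j+2) p := by
  have key := vanish c (fun p => C μ * c.P (2*j+2) p - C μ * c.Q (2*j+2) p) ?_ ?_ ?_
  · intro p
    have := key p
    linear_combination this
  · intro p q
    simp only [map_add]
    ring
  · intro a
    have h1 : c.P (2*j+2) (C a) = 0 := P_C_eq_zero (2*j+1) c a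
    have h2 : c.Q (2*j+2) (C a) = 0 := P_C_eq_zero (2*j+1) c.mirror a
    simp only [h1, h2, mul_zero, sub_zero]
  · intro v p
    refine ⟨Ws δ (2*j+2) v, ?_⟩
    have hP : c.P (2*j+2) (c.lf v * p) = c.lf (Ws δ (2*j+2) v) * c.P (2*j+2) p
        + C (dsc δ ((Ws δ (2*j+1) v.swap).swap)) * c.Q (2*j+1) p
        + C (Bs δ (2*j+1) v) * c.P (2*j+1) p := CL (2*j+1) c v p
    have hQ : c.Q (2*j+2) (c.lf v * p) = c.lf ((Ws δ (2*j+2) v.swap).swap) * c.Q (2*j+2) p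
        + C (dsc δ ((Ws δ (2*j+1) v).swap)) * c.P (2*j+1) p
        + C (Bs δ (2*j+1) v.swap) * c.Q (2*j+1) p := CLQ (2*j+1) c v p
    have hv1 := hvan c p
    have hv2 : (C μ * C (qn δ (2*j+1)) - C μ) * c.Q (2*j+1) p = 0 := hvan c.mirror p
    have h1 : (C μ : MvPolynomial (Fin 2) k) * C (qn δ (2*j+2)) = 0 := by
      rw [← map_mul, hμ, map_zero]
    have r3 : (C (qn δ (2*j+3)) : MvPolynomial (Fin 2) k)
        = C δ * C (qn δ (2*j+2)) - C (qn δ (2*j+1)) := by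
      rw [← map_mul, ← map_sub]
      exact congrArg C (qn_rec' δ _ _ (2*j+1) (by omega) (by omega))
    have r2 : (C (qn δ (2*j+2)) : MvPolynomial (Fin 2) k)
        = C δ * C (qn δ (2*j+1)) - C (qn δ (2*j)) := by
      rw [← map_mul, ← map_sub]
      exact congrArg C (qn_rec' δ _ _ (2*j) (by omega) (by omega))
    show C μ * c.P (2*j+2) (c.lf v * p) - C μ * c.Q (2*j+2) (c.lf v * p)
        = c.lf (Ws δ (2*j+2) v) * (C μ * c.P (2*j+2) p - C μ * c.Q (2*j+2) p)
    rw [hP, hQ, (Ws_formula δ j v).1, (Ws_formula δ j v).2,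
      (Ws_formula δ j v.swap).1, (Ws_formula δ j v.swap).2, Bs_odd, Bs_odd]
    simp only [lf, dsc, Prod.fst_swap, Prod.snd_swap, Prod.swap_prod_mk,
      map_sub, map_mul, map_add, map_ofNat]
    linear_combination
      ((C δ * C v.1 - 2*C v.2) * c.x * c.Q (2*j+2) p
        + (2*C v.1 - C δ*C v.2) * c.y * c.Q (2*j+2) p
        + (2*C v.2 - C δ*C v.1) * c.Q (2*j+1) p
        + (C δ*C v.2 - 2*C v.1) * c.P (2*j+1) p) * h1
      + (C μ * C v.1 * c.x * c.Q (2*j+2) p - C μ * C v.2 * c.y * c.Q (2*j+2) p) * r3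
      + (2*(C μ) * C v.1 * c.P (2*j+1) p - 2*(C μ) * C v.2 * c.Q (2*j+1) p) * r2
      + (2*C v.1 - C δ*C v.2) * hv2 + (C δ*C v.1 - 2*C v.2) * hv1


lemma braid_odd (j : ℕ) (c : DemCtx k δ) (μ : k) (hμ : μ * qn δ (2*j+3) = 0) :
    ∀ p, C μ * c.P (2*j+3) p = C μ * C (qn δ (2*j+2)) * c.Q (2*j+3) p := by
  have key := vanish c
    (fun p => C μ * c.P (2*j+3) p - C μ * C (qn δ (2*j+2)) * c.Q (2*j+3) p) ?_ ?_ ?_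
  · intro p
    have := key p
    linear_combination this
  · intro p q
    simp only [map_add]
    ring
  · intro a
    have h1 : c.P (2*j+3) (C a) = 0 := P_C_eq_zero (2*j+2) c a
    have h2 : c.Q (2*j+3) (C a) = 0 := P_C_eq_zero (2*j+2) c.mirror a
    simp only [h1, h2, mul_zero, sub_zero]
  · intro v p
    refine ⟨Ws δ (2*j+3) v, ?_⟩
    have hP : c.P (2*j+3) (c.lf v * p) = c.lf (Ws δ (2*j+3) v) * c.P (2*j+3) p
        + C (dsc δ ((Ws δ (2*j+2) v.swap).swap)) * c.Q (2*j+2) p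
        + C (Bs δ (2*j+2) v) * c.P (2*j+2) p := CL (2*j+2) c v p
    have hQ : c.Q (2*j+3) (c.lf v * p) = c.lf ((Ws δ (2*j+3) v.swap).swap) * c.Q (2*j+3) p
        + C (dsc δ ((Ws δ (2*j+2) v).swap)) * c.P (2*j+2) p
        + C (Bs δ (2*j+2) v.swap) * c.Q (2*j+2) p := CLQ (2*j+2) c v p
    have hμR : (C μ : MvPolynomial (Fin 2) k) * C (qn δ (2*j+3)) = 0 := by
      rw [← map_mul, hμ, map_zero]
    have r4R : (C (qn δ (2*j+4)) : MvPolynomial (Fin 2) k)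
        = C δ * C (qn δ (2*j+3)) - C (qn δ (2*j+2)) := by
      rw [← map_mul, ← map_sub]
      exact congrArg C (qn_rec' δ _ _ (2*j+2) (by omega) (by omega))
    have r3R : (C (qn δ (2*j+3)) : MvPolynomial (Fin 2) k)
        = C δ * C (qn δ (2*j+2)) - C (qn δ (2*j+1)) := by
      rw [← map_mul, ← map_sub]
      exact congrArg C (qn_rec' δ _ _ (2*j+1) (by omega) (by omega))
    have catR : (C (qn δ (2*j+2)) : MvPolynomial (Fin 2) k) * C (qn δ (2*j+2))
        = 1 + C (qn δ (2*j+1)) * C (qn δ (2*j+3)) := by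
      rw [← map_mul, ← map_mul, ← map_one (C : k →+* MvPolynomial (Fin 2) k), ← map_add]
      refine congrArg C ?_
      have := qn_catalan δ (2*j+1)
      rw [show 2*j+1+1 = 2*j+2 from by omega, show 2*j+1+2 = 2*j+3 from by omega] at this
      exact this
    have hW3 : Ws δ (2*j+3) v = (qn δ (2*j+4) * v.2 - qn δ (2*j+3) * v.1,
        qn δ (2*j+3) * v.2 - qn δ (2*j+2) * v.1) := by
      have := (Ws_formula δ (j+1) v).1
      rw [show 2*(j+1)+1 = 2*j+3 from by omega, show 2*(j+1)+2 = 2*j+4 from by omega,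
        show 2*(j+1) = 2*j+2 from by omega] at this
      exact this
    have hW3s : Ws δ (2*j+3) v.swap = (qn δ (2*j+4) * v.1 - qn δ (2*j+3) * v.2,
        qn δ (2*j+3) * v.1 - qn δ (2*j+2) * v.2) := by
      have := (Ws_formula δ (j+1) v.swap).1
      rw [show 2*(j+1)+1 = 2*j+3 from by omega, show 2*(j+1)+2 = 2*j+4 from by omega,
        show 2*(j+1) = 2*j+2 from by omega] at this
      simpa using this
    show C μ * c.P (2*j+3) (c.lf v * p) - C μ * C (qn δ (2*j+2)) * c.Q (2*j+3) (c.lf v * p)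
        = c.lf (Ws δ (2*j+3) v)
          * (C μ * c.P (2*j+3) p - C μ * C (qn δ (2*j+2)) * c.Q (2*j+3) p)
    rw [hP, hQ, hW3, hW3s, (Ws_formula δ j v).2, (Ws_formula δ j v.swap).2,
      Bs_even, Bs_even]
    simp only [lf, dsc, Prod.fst_swap, Prod.snd_swap, Prod.swap_prod_mk,
      map_sub, map_mul, map_add, map_ofNat]
    linear_combination
      ( C (qn δ (2*j+2)) * (C δ * C v.2 - 2*C v.1) * c.x * c.Q (2*j+3) p
        + C (qn δ (2*j+2)) * (2*C v.2 - C δ * C v.1) * c.y * c.Q (2*j+3) p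
        + (2*C v.1 - C δ * C v.2) * c.Q (2*j+2) p
        + ((C δ * C (qn δ (2*j+2)) - 2*C (qn δ (2*j+1))) * C v.1
            + (C δ * C (qn δ (2*j+1)) - 2*C (qn δ (2*j+2))) * C v.2) * c.P (2*j+2) p
        ) * hμR
      + (C μ * C (qn δ (2*j+2)) * C v.2 * c.x * c.Q (2*j+3) p
          - C μ * C (qn δ (2*j+2)) * C v.1 * c.y * c.Q (2*j+3) p) * r4R
      + (-2*(C μ) * C v.1 * c.Q (2*j+2) p
          + 2*(C μ) * C (qn δ (2*j+2)) * C v.2 * c.P (2*j+2) p) * r3R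
      + (C μ * (C δ * C v.2 - 2*C v.1) * c.P (2*j+2) p) * catR


lemma van_even (j : ℕ) (c : DemCtx k δ) (μ : k) (hμ : μ * qn δ (2*j+2) = 0)
    (hbraid : ∀ p, C μ * c.P (2*j+2) p = C μ * c.Q (2*j+2) p)
    (hvan2 : ∀ p, (C μ * C (qn δ (2*j+1)) - C μ) * c.Q (2*j+2) p = 0) :
    ∀ p, C μ * c.P (2*j+3) p = 0 := by
  have key := vanish c (fun p => C μ * c.P (2*j+3) p) ?_ ?_ ?_
  · exact key
  · intro p q
    simp only [map_add]
    ring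
  · intro a
    have h1 : c.P (2*j+3) (C a) = 0 := P_C_eq_zero (2*j+2) c a
    simp only [h1, mul_zero]
  · intro v p
    refine ⟨Ws δ (2*j+3) v, ?_⟩
    have hP : c.P (2*j+3) (c.lf v * p) = c.lf (Ws δ (2*j+3) v) * c.P (2*j+3) p
        + C (dsc δ ((Ws δ (2*j+2) v.swap).swap)) * c.Q (2*j+2) p
        + C (Bs δ (2*j+2) v) * c.P (2*j+2) p := CL (2*j+2) c v p
    have hμR : (C μ : MvPolynomial (Fin 2) k) * C (qn δ (2*j+2)) = 0 := by
      rw [← map_mul, hμ, map_zero]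
    have r4R : (C (qn δ (2*j+4)) : MvPolynomial (Fin 2) k)
        = C δ * C (qn δ (2*j+3)) - C (qn δ (2*j+2)) := by
      rw [← map_mul, ← map_sub]
      exact congrArg C (qn_rec' δ _ _ (2*j+2) (by omega) (by omega))
    have r2R : (C (qn δ (2*j+2)) : MvPolynomial (Fin 2) k)
        = C δ * C (qn δ (2*j+1)) - C (qn δ (2*j)) := by
      rw [← map_mul, ← map_sub]
      exact congrArg C (qn_rec' δ _ _ (2*j) (by omega) (by omega))
    have f4R : (C (qn δ (2*j+4)) : MvPolynomial (Fin 2) k) + C (qn δ (2*j))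
        = (C δ * C δ - 2) * C (qn δ (2*j+2)) := by
      have h := qn_four_rec δ (2*j)
      rw [show 2*j+4 = 2*j+4 from rfl] at h
      calc (C (qn δ (2*j+4)) : MvPolynomial (Fin 2) k) + C (qn δ (2*j))
          = C (qn δ (2*j+4) + qn δ (2*j)) := by rw [map_add]
        _ = C ((δ*δ - 2) * qn δ (2*j+2)) := by rw [h]
        _ = (C δ * C δ - 2) * C (qn δ (2*j+2)) := by
            rw [map_mul, map_sub, map_mul, map_ofNat]
    have hb := hbraid p
    have hv2 := hvan2 p
    have hW3 : Ws δ (2*j+3) v = (qn δ (2*j+4) * v.2 - qn δ (2*j+3) * v.1,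
        qn δ (2*j+3) * v.2 - qn δ (2*j+2) * v.1) := by
      have := (Ws_formula δ (j+1) v).1
      rw [show 2*(j+1)+1 = 2*j+3 from by omega, show 2*(j+1)+2 = 2*j+4 from by omega,
        show 2*(j+1) = 2*j+2 from by omega] at this
      exact this
    show C μ * c.P (2*j+3) (c.lf v * p) = c.lf (Ws δ (2*j+3) v) * (C μ * c.P (2*j+3) p)
    rw [hP, hW3, (Ws_formula δ j v.swap).2, Bs_even]
    simp only [lf, dsc, Prod.fst_swap, Prod.snd_swap, Prod.swap_prod_mk,
      map_sub, map_mul, map_add, map_ofNat]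
    linear_combination
      ((C δ * C v.1 - (C δ * C δ - 2) * C v.2) * c.Q (2*j+2) p) * hμR
      + (C μ * C v.2 * c.Q (2*j+2) p) * r4R
      + (-(C μ) * C v.2 * c.Q (2*j+2) p) * f4R
      + (C μ * C v.2 * c.Q (2*j+2) p) * r2R
      + (2*C v.1 - C δ * C v.2) * hb
      + (C δ * C v.2 - 2*C v.1) * hv2

lemma van_odd (j : ℕ) (c : DemCtx k δ) (μ : k) (hμ : μ * qn δ (2*j+3) = 0)
    (hbraid : ∀ p, C μ * c.P (2*j+3) p = C μ * C (qn δ (2*j+2)) * c.Q (2*j+3) p) :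
    ∀ p, C μ * c.P (2*j+4) p = 0 := by
  have key := vanish c (fun p => C μ * c.P (2*j+4) p) ?_ ?_ ?_
  · exact key
  · intro p q
    simp only [map_add]
    ring
  · intro a
    have h1 : c.P (2*j+4) (C a) = 0 := P_C_eq_zero (2*j+3) c a
    simp only [h1, mul_zero]
  · intro v p
    refine ⟨Ws δ (2*j+4) v, ?_⟩
    have hP : c.P (2*j+4) (c.lf v * p) = c.lf (Ws δ (2*j+4) v) * c.P (2*j+4) p
        + C (dsc δ ((Ws δ (2*j+3) v.swap).swap)) * c.Q (2*j+3) p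
        + C (Bs δ (2*j+3) v) * c.P (2*j+3) p := CL (2*j+3) c v p
    have hμR : (C μ : MvPolynomial (Fin 2) k) * C (qn δ (2*j+3)) = 0 := by
      rw [← map_mul, hμ, map_zero]
    have r4R : (C (qn δ (2*j+4)) : MvPolynomial (Fin 2) k)
        = C δ * C (qn δ (2*j+3)) - C (qn δ (2*j+2)) := by
      rw [← map_mul, ← map_sub]
      exact congrArg C (qn_rec' δ _ _ (2*j+2) (by omega) (by omega))
    have hb := hbraid p
    have hW4 : Ws δ (2*j+4) v = (qn δ (2*j+5) * v.1 - qn δ (2*j+4) * v.2,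
        qn δ (2*j+4) * v.1 - qn δ (2*j+3) * v.2) := by
      have := (Ws_formula δ (j+1) v).2
      rw [show 2*(j+1)+1 = 2*j+3 from by omega, show 2*(j+1)+2 = 2*j+4 from by omega,
        show 2*(j+1)+3 = 2*j+5 from by omega] at this
      exact this
    have hW3s : Ws δ (2*j+3) v.swap = (qn δ (2*j+4) * v.1 - qn δ (2*j+3) * v.2,
        qn δ (2*j+3) * v.1 - qn δ (2*j+2) * v.2) := by
      have := (Ws_formula δ (j+1) v.swap).1
      rw [show 2*(j+1)+1 = 2*j+3 from by omega, show 2*(j+1)+2 = 2*j+4 from by omega,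
        show 2*(j+1) = 2*j+2 from by omega] at this
      simpa using this
    have hB3 : Bs δ (2*j+3) v = 2*v.2 - δ*v.1 := by
      have := Bs_odd (δ := δ) (j+1) v
      rw [show 2*(j+1)+1 = 2*j+3 from by omega] at this
      exact this
    show C μ * c.P (2*j+4) (c.lf v * p) = c.lf (Ws δ (2*j+4) v) * (C μ * c.P (2*j+4) p)
    rw [hP, hW4, hW3s, hB3]
    simp only [lf, dsc, Prod.fst_swap, Prod.snd_swap, Prod.swap_prod_mk,
      map_sub, map_mul, map_add, map_ofNat]
    linear_combination
      ((2*C v.1 + C δ * C v.2 - C δ * C δ * C v.1) * c.Q (2*j+3) p) * hμR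
      + (-(C δ) * C μ * C v.1 * c.Q (2*j+3) p) * r4R
      + (2*C v.2 - C δ * C v.1) * hb


theorem main : ∀ n : ℕ, ∀ (c : DemCtx k δ) (μ : k), μ * qn δ n = 0 →
    ((Even n → ∀ p, C μ * c.P n p = C μ * c.Q n p) ∧
     (Odd n → ∀ p, C μ * c.P n p = C μ * C (qn δ (n-1)) * c.Q n p) ∧
     (1 ≤ n → ∀ p, C μ * c.P (n+1) p = 0)) := by
  intro n
  induction n using Nat.strong_induction_on with
  | _ n IH =>
  intro c μ hμ
  rcases Nat.even_or_odd n with he | ho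
  · -- n even
    obtain ⟨t, ht⟩ := he
    rcases t with _ | j
    · -- n = 0
      have h0 : n = 0 := by omega
      subst h0
      refine ⟨fun _ p => rfl, fun hodd => ?_, fun h1 => ?_⟩
      · exact absurd hodd (by decide)
      · omega
    · -- n = 2j+2
      have h2 : n = 2*j+2 := by omega
      subst h2
      have hCν : (C (μ * (qn δ (2*j+1) - 1)) : MvPolynomial (Fin 2) k)
          = C μ * C (qn δ (2*j+1)) - C μ := by
        rw [map_mul, map_sub, map_one, mul_sub, mul_one]
      have hνq : (μ * (qn δ (2*j+1) - 1)) * qn δ (j+1) = 0 := by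
        linear_combination μ * qn_q3 δ j + qn δ j * hμ
      have hV1 : ∀ (c' : DemCtx k δ) p,
          C (μ * (qn δ (2*j+1) - 1)) * c'.P (j+2) p = 0 := by
        intro c' p
        exact (IH (j+1) (by omega) c' _ hνq).2.2 (by omega) p
      have hlad := ladder (j+1) (μ * (qn δ (2*j+1) - 1)) hV1
      have hvan : ∀ (c' : DemCtx k δ) p,
          (C μ * C (qn δ (2*j+1)) - C μ) * c'.P (2*j+1) p = 0 := by
        rcases Nat.eq_zero_or_pos j with hj | hj
        · subst hj
          intro c' p
          have hq : (qn δ (2*0+1)) = 1 := rfl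
          rw [hq, map_one, mul_one, sub_self, zero_mul]
        · intro c' p
          have h := hlad (j-1) c' p
          rw [show j+1+1+(j-1) = 2*j+1 from by omega] at h
          rw [hCν] at h
          exact h
      have hvan2 : ∀ p, (C μ * C (qn δ (2*j+1)) - C μ) * c.Q (2*j+2) p = 0 := by
        intro p
        have h := hlad j c.mirror p
        rw [show j+1+1+j = 2*j+2 from by omega] at h
        rw [hCν] at h
        exact h
      have hbraidE := braid_even j c μ hμ hvan
      refine ⟨fun _ => hbraidE, fun hodd => ?_, fun _ => van_even j c μ hμ hbraidE hvan2⟩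
      · obtain ⟨r, hr⟩ := hodd
        omega
  · -- n odd
    obtain ⟨t, ht⟩ := ho
    rcases t with _ | j
    · -- n = 1
      have h1 : n = 1 := by omega
      subst h1
      have hμ0 : μ = 0 := by
        have : μ * qn δ 1 = μ := by rw [qn_one, mul_one]
        rw [this] at hμ
        exact hμ
      subst hμ0
      refine ⟨fun heven => absurd heven (by decide), fun _ p => ?_, fun _ p => ?_⟩
      · rw [map_zero, zero_mul, zero_mul, zero_mul]
      · rw [map_zero, zero_mul]
    · -- n = 2j+3
      have h3 : n = 2*j+3 := by omega
      subst h3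
      have hbraidO := braid_odd j c μ hμ
      refine ⟨fun heven => ?_, fun _ p => ?_, fun _ => van_odd j c μ hμ hbraidO⟩
      · obtain ⟨r, hr⟩ := heven
        omega
      · have h := hbraidO p
        rw [show 2*j+3-1 = 2*j+2 from rfl]
        exact h

end DemCtx
end Ctx


section Assembly
variable {k : Type*} [CommRing k] (δ : k)

lemma σs_X0 : σs δ (X 0) = -(X 0 : MvPolynomial (Fin 2) k) := by simp [σs]
lemma σs_X1 : σs δ (X 1) = (X 1 : MvPolynomial (Fin 2) k) + C δ * X 0 := by simp [σs]
lemma σt_X1 : σt δ (X 1) = -(X 1 : MvPolynomial (Fin 2) k) := by simp [σt]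
lemma σt_X0 : σt δ (X 0) = (X 0 : MvPolynomial (Fin 2) k) + C δ * X 1 := by simp [σt]

lemma σs_invol (f : MvPolynomial (Fin 2) k) : σs δ (σs δ f) = f := by
  have h : (σs δ).comp (σs δ) = AlgHom.id k (MvPolynomial (Fin 2) k) := by
    apply MvPolynomial.algHom_ext
    intro i
    fin_cases i
    · simp [σs]
    · simp [σs] ; try ring
  have := congrArg (fun φ => φ f) h
  simpa using this

lemma σt_invol (f : MvPolynomial (Fin 2) k) : σt δ (σt δ f) = f := by
  have h : (σt δ).comp (σt δ) = AlgHom.id k (MvPolynomial (Fin 2) k) := by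
    apply MvPolynomial.algHom_ext
    intro i
    fin_cases i
    · simp [σt] ; try ring
    · simp [σt]
  have := congrArg (fun φ => φ f) h
  simpa using this

lemma Xreg (i : Fin 2) (f g : MvPolynomial (Fin 2) k) (h : X i * f = X i * g) : f = g :=
  MvPolynomial.isRegular_X.left h

lemma exists_div_s (f : MvPolynomial (Fin 2) k) :
    ∃ g, X 0 * g = f - σs δ f := by
  induction f using MvPolynomial.induction_on with
  | C a =>
      refine ⟨0, ?_⟩
      have : σs δ (C a) = C a := by
        have := (σs δ).commutes a
        simpa [MvPolynomial.algebraMap_eq] using this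
      rw [this, sub_self, mul_zero]
  | add p q hp hq =>
      obtain ⟨g1, h1⟩ := hp
      obtain ⟨g2, h2⟩ := hq
      refine ⟨g1 + g2, ?_⟩
      rw [mul_add, h1, h2, map_add]
      ring
  | mul_X p i hp =>
      obtain ⟨g, hg⟩ := hp
      have h2 : i = 0 ∨ i = 1 := by fin_cases i ; exacts [Or.inl rfl, Or.inr rfl]
      rcases h2 with h | h <;> subst h
      · refine ⟨p + σs δ p, ?_⟩
        rw [map_mul, σs_X0]
        ring
      · refine ⟨g * X 1 - C δ * σs δ p, ?_⟩
        rw [map_mul, σs_X1, mul_sub, ← mul_assoc, hg]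
        ring

lemma exists_div_t (f : MvPolynomial (Fin 2) k) :
    ∃ g, X 1 * g = f - σt δ f := by
  induction f using MvPolynomial.induction_on with
  | C a =>
      refine ⟨0, ?_⟩
      have : σt δ (C a) = C a := by
        have := (σt δ).commutes a
        simpa [MvPolynomial.algebraMap_eq] using this
      rw [this, sub_self, mul_zero]
  | add p q hp hq =>
      obtain ⟨g1, h1⟩ := hp
      obtain ⟨g2, h2⟩ := hq
      refine ⟨g1 + g2, ?_⟩
      rw [mul_add, h1, h2, map_add]
      ring
  | mul_X p i hp =>
      obtain ⟨g, hg⟩ := hp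
      have h2 : i = 0 ∨ i = 1 := by fin_cases i ; exacts [Or.inl rfl, Or.inr rfl]
      rcases h2 with h | h <;> subst h
      · refine ⟨g * X 0 - C δ * σt δ p, ?_⟩
        rw [map_mul, σt_X0, mul_sub, ← mul_assoc, hg]
        ring
      · refine ⟨p + σt δ p, ?_⟩
        rw [map_mul, σt_X1]
        ring

noncomputable def DsMap : MvPolynomial (Fin 2) k →ₗ[k] MvPolynomial (Fin 2) k where
  toFun f := Classical.choose (exists_div_s δ f)
  map_add' a b := by
    apply Xreg 0
    rw [mul_add, Classical.choose_spec (exists_div_s δ a),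
      Classical.choose_spec (exists_div_s δ b),
      Classical.choose_spec (exists_div_s δ (a+b)), map_add]
    ring
  map_smul' m f := by
    apply Xreg 0
    simp only [RingHom.id_apply]
    rw [Classical.choose_spec (exists_div_s δ (m • f)), mul_smul_comm,
      Classical.choose_spec (exists_div_s δ f), map_smul, smul_sub]

lemma DsMap_spec (f : MvPolynomial (Fin 2) k) : X 0 * DsMap δ f = f - σs δ f :=
  Classical.choose_spec (exists_div_s δ f)

noncomputable def DtMap : MvPolynomial (Fin 2) k →ₗ[k] MvPolynomial (Fin 2) k where
  toFun f := Classical.choose (exists_div_t δ f)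
  map_add' a b := by
    apply Xreg 1
    rw [mul_add, Classical.choose_spec (exists_div_t δ a),
      Classical.choose_spec (exists_div_t δ b),
      Classical.choose_spec (exists_div_t δ (a+b)), map_add]
    ring
  map_smul' m f := by
    apply Xreg 1
    simp only [RingHom.id_apply]
    rw [Classical.choose_spec (exists_div_t δ (m • f)), mul_smul_comm,
      Classical.choose_spec (exists_div_t δ f), map_smul, smul_sub]

lemma DtMap_spec (f : MvPolynomial (Fin 2) k) : X 1 * DtMap δ f = f - σt δ f :=
  Classical.choose_spec (exists_div_t δ f)

end Assembly


/-- There exist unique `k`-linear simple Demazure operators `Ds, Dt : R → R` with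
`αs·Ds(f) = f − σs(f)` and `αt·Dt(f) = f − σt(f)`.  Moreover, if `m ≥ 2` and `[m] = 0`
in `k`, then for `m` even the two alternating compositions of length `m` agree
(`Ds ∘ Dt ∘ ⋯ ∘ Dt = Dt ∘ Ds ∘ ⋯ ∘ Ds`), and for `m` odd one has
`Ds ∘ Dt ∘ ⋯ ∘ Ds = [m−1] · (Dt ∘ Ds ∘ ⋯ ∘ Dt)`. -/
theorem demazure_exists_unique_and_braid {k : Type*} [CommRing k] (δ : k) :
    ((∃! Ds : MvPolynomial (Fin 2) k →ₗ[k] MvPolynomial (Fin 2) k,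
        ∀ f, X 0 * Ds f = f - σs δ f) ∧
     (∃! Dt : MvPolynomial (Fin 2) k →ₗ[k] MvPolynomial (Fin 2) k,
        ∀ f, X 1 * Dt f = f - σt δ f)) ∧
    (∀ (Ds Dt : MvPolynomial (Fin 2) k →ₗ[k] MvPolynomial (Fin 2) k),
      (∀ f, X 0 * Ds f = f - σs δ f) → (∀ f, X 1 * Dt f = f - σt δ f) →
      ∀ m : ℕ, 2 ≤ m → qn δ m = 0 →
        (Even m → altComp Ds Dt m = altComp Dt Ds m) ∧
        (Odd m → altComp Ds Dt m = qn δ (m - 1) • altComp Dt Ds m)) := by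
  constructor
  · constructor
    · refine ⟨DsMap δ, DsMap_spec δ, ?_⟩
      intro D' h'
      refine LinearMap.ext fun f => ?_
      apply Xreg 0
      rw [h' f, DsMap_spec δ f]
    · refine ⟨DtMap δ, DtMap_spec δ, ?_⟩
      intro D' h'
      refine LinearMap.ext fun f => ?_
      apply Xreg 1
      rw [h' f, DtMap_spec δ f]
  · intro Ds Dt hs ht m _ hq
    let c : DemCtx k δ :=
      { x := X 0
        y := X 1
        σ1 := σs δ
        σ2 := σt δ
        D1 := Ds
        D2 := Dt
        hD1 := hs
        hD2 := ht
        hσ1x := σs_X0 δ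
        hσ1y := σs_X1 δ
        hσ2y := σt_X1 δ
        hσ2x := σt_X0 δ
        hinv1 := σs_invol δ
        hinv2 := σt_invol δ
        hxreg := Xreg 0
        hyreg := Xreg 1
        hvar := fun i => by
          fin_cases i
          · exact Or.inl rfl
          · exact Or.inr rfl }
    have h1 : (1 : k) * qn δ m = 0 := by rw [one_mul, hq]
    have hm := DemCtx.main m c 1 h1
    constructor
    · intro hev
      have := hm.1 hev
      refine LinearMap.ext fun f => ?_
      have h := this f
      simp only [map_one, one_mul] at h
      exact h
    · intro hodd
      have := hm.2.1 hodd
      refine LinearMap.ext fun f => ?_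
      have h := this f
      simp only [map_one, one_mul] at h
      rw [show (altComp Ds Dt m) f = c.P m f from rfl, h]
      rw [LinearMap.smul_apply]
      rw [show (altComp Dt Ds m) f = c.Q m f from rfl]
      rw [smul_eq_C_mul]
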